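/- Let P be a natural unit interval order on [n] with incomparability graph G, and b_i = |{ j < i : {j,i} ∈ E(G) }|. Let Ñ_P be the set of words of length n over P with distinct letters, starting with the smallest element of P (in the integer order), and with no P-ascent (no i with α_i <_P α_{i+1}). Then ∑_{σ ∈ Ñ_P} t^{inv_G(σ)} = ∏_{i=2}^n [b_i]_t. -/

import Mathlib

/-- `[k]_t = 1 + t + ⋯ + t^(k-1)`. -/
noncomputable def tnum (R : Type*) [CommSemiring R] (k : ℕ) : Polynomial R :=
  ∑ j ∈ Finset.range k, Polynomial.X ^ j

/-- `[n]_t! = ∏_{i=1}^n [i]_t`. -/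
noncomputable def tfact (R : Type*) [CommSemiring R] (n : ℕ) : Polynomial R :=
  ∏ i ∈ Finset.range n, tnum R (i + 1)

/-- The word `σ(1), σ(2), …, σ(n)` of a permutation, in 0-based positions:
`word n σ i = σ(i+1)` for `i < n` (letters taken in `{1,…,n}`), and `0` otherwise. -/
def word (n : ℕ) (σ : Equiv.Perm (Fin n)) (i : ℕ) : ℕ :=
  if h : i < n then (σ ⟨i, h⟩).1 + 1 else 0

/-- `inv_G(σ)`: the number of pairs of positions `i < j` with `{σ(i), σ(j)}` an edge of the
incomparability graph `G` of `P` (i.e. a `P`-incomparable pair) and `σ(i) > σ(j)`. -/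
def invG (n : ℕ) (ltP : ℕ → ℕ → Prop) [DecidableRel ltP] (σ : Equiv.Perm (Fin n)) : ℕ :=
  ((Finset.range n ×ˢ Finset.range n).filter fun p =>
    p.1 < p.2 ∧ word n σ p.2 < word n σ p.1 ∧
      ¬ ltP (word n σ p.1) (word n σ p.2) ∧ ¬ ltP (word n σ p.2) (word n σ p.1)).card

open List Finset Polynomial

section Aux
variable (ltP : ℕ → ℕ → Prop) [DecidableRel ltP]

/-- edge predicate together with the inversion condition: `b < a` and `a,b` incomparable. -/
def qE (a b : ℕ) : Bool := decide (b < a ∧ ¬ ltP a b ∧ ¬ ltP b a)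

def invL : List ℕ → ℕ
  | [] => 0
  | a :: l => l.countP (qE ltP a) + invL l

def condL (L : List ℕ) : Prop := L.getD 0 0 = 1 ∧ List.IsChain (fun a b => ¬ ltP a b) L

instance : DecidablePred (condL ltP) := fun L => by unfold condL; infer_instance

lemma countP_eq_sum (q : ℕ → Bool) : ∀ l : List ℕ,
    (l.countP q : ℕ) = ∑ i ∈ Finset.range l.length, if q (l.getD i 0) then 1 else 0
  | [] => by simp
  | a :: l => by
    rw [List.countP_cons, List.length_cons, Finset.sum_range_succ']
    simp only [List.getD_cons_succ, List.getD_cons_zero]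
    rw [← countP_eq_sum q l]

lemma invL_eq_sum : ∀ L : List ℕ, invL ltP L =
    ∑ i ∈ Finset.range L.length, ∑ j ∈ Finset.range L.length,
      if i < j ∧ L.getD j 0 < L.getD i 0 ∧ ¬ ltP (L.getD i 0) (L.getD j 0) ∧
          ¬ ltP (L.getD j 0) (L.getD i 0) then 1 else 0
  | [] => by simp [invL]
  | a :: l => by
    rw [List.length_cons, Finset.sum_range_succ']
    have h0 : (∑ j ∈ Finset.range (l.length + 1),
        if 0 < j ∧ (a :: l).getD j 0 < (a :: l).getD 0 0 ∧
          ¬ ltP ((a :: l).getD 0 0) ((a :: l).getD j 0) ∧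
          ¬ ltP ((a :: l).getD j 0) ((a :: l).getD 0 0) then 1 else 0)
        = l.countP (qE ltP a) := by
      rw [Finset.sum_range_succ']
      simp only [List.getD_cons_succ, List.getD_cons_zero, Nat.succ_pos, true_and, lt_irrefl,
        false_and, if_false, add_zero]
      rw [countP_eq_sum]
      refine Finset.sum_congr rfl fun i _ => ?_
      simp [qE]
    have h1 : ∀ i, (∑ j ∈ Finset.range (l.length + 1),
        if i + 1 < j ∧ (a :: l).getD j 0 < (a :: l).getD (i+1) 0 ∧
          ¬ ltP ((a :: l).getD (i+1) 0) ((a :: l).getD j 0) ∧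
          ¬ ltP ((a :: l).getD j 0) ((a :: l).getD (i+1) 0) then 1 else 0)
        = ∑ j ∈ Finset.range l.length,
          if i < j ∧ l.getD j 0 < l.getD i 0 ∧ ¬ ltP (l.getD i 0) (l.getD j 0) ∧
            ¬ ltP (l.getD j 0) (l.getD i 0) then 1 else 0 := by
      intro i
      rw [Finset.sum_range_succ']
      simp [List.getD_cons_succ, List.getD_cons_zero, Nat.add_lt_add_iff_right]
    simp only [h1, h0]
    rw [← invL_eq_sum l]
    simp only [invL]
    ring

end Aux
lemma myIndexOf_insertIdx (m : ℕ) : ∀ (p : ℕ) (w : List ℕ), p ≤ w.length → m ∉ w →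
    (List.insertIdx w p m).idxOf m = p
  | 0, w, _, _ => by rw [List.insertIdx_zero, List.idxOf_cons_self]
  | p+1, [], h, _ => by simp at h
  | p+1, a :: w, h, hm => by
    have hm' : m ∉ w := fun hx => hm (List.mem_cons_of_mem _ hx)
    have ha : a ≠ m := fun hx => hm (hx ▸ (List.mem_cons_self (a := a) (l := w)))
    rw [List.insertIdx_succ_cons, List.idxOf_cons_ne _ ha,
      myIndexOf_insertIdx m p w (by simpa using h) hm']

lemma myInsertIdx_idxOf (m : ℕ) : ∀ (L : List ℕ), m ∈ L →
    List.insertIdx (L.eraseIdx (L.idxOf m)) (L.idxOf m) m = L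
  | [], h => by simp at h
  | a :: L, h => by
    by_cases ha : a = m
    · subst ha
      rw [List.idxOf_cons_self]
      simp [List.insertIdx_zero]
    · have hmL : m ∈ L := by
        rcases List.mem_cons.mp h with h1 | h1
        · exact absurd h1.symm ha
        · exact h1
      rw [List.idxOf_cons_ne _ (by exact ha)]
      show List.insertIdx ((a :: L).eraseIdx (L.idxOf m + 1)) (L.idxOf m + 1) m = a :: L
      rw [List.eraseIdx_cons_succ, List.insertIdx_succ_cons, myInsertIdx_idxOf m L hmL]

lemma myInsertIdx_eq (m : ℕ) : ∀ (p : ℕ) (w : List ℕ), p ≤ w.length →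
    List.insertIdx w p m = w.take p ++ m :: w.drop p
  | 0, w, _ => by simp [List.insertIdx_zero]
  | p+1, [], h => by simp at h
  | p+1, a :: w, h => by
    rw [List.insertIdx_succ_cons, myInsertIdx_eq m p w (by simpa using h)]
    simp

lemma invL_insertIdx (ltP : ℕ → ℕ → Prop) [DecidableRel ltP] (m : ℕ) :
    ∀ (p : ℕ) (w : List ℕ), p ≤ w.length → (∀ a ∈ w, a < m) →
    invL ltP (List.insertIdx w p m) = invL ltP w + (w.drop p).countP (qE ltP m)
  | 0, w, _, _ => by
    rw [List.insertIdx_zero]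
    show w.countP (qE ltP m) + invL ltP w = _
    rw [List.drop_zero]; ring
  | p+1, [], h, _ => by simp at h
  | p+1, a :: w, h, hlt => by
    have hp : p ≤ w.length := by simpa using h
    have hlt' : ∀ b ∈ w, b < m := fun b hb => hlt b (List.mem_cons_of_mem _ hb)
    rw [List.insertIdx_succ_cons]
    show (List.insertIdx w p m).countP (qE ltP a) + invL ltP (List.insertIdx w p m) = _
    rw [(List.perm_insertIdx m w hp).countP_eq (qE ltP a), List.countP_cons,
      invL_insertIdx ltP m p w hp hlt']
    have hqm : qE ltP a m = false := by
      have : ¬ m < a := not_lt.mpr (le_of_lt (hlt a ((List.mem_cons_self (a := a) (l := w)))))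
      simp [qE, this]
    rw [hqm]
    show _ = invL ltP (a :: w) + _
    simp only [invL, List.drop_succ_cons, Bool.false_eq_true, if_false, add_zero]
    omega

lemma sum_ins (c : ℕ → Bool) : ∀ w : List ℕ,
    ∑ q ∈ Finset.range w.length,
      (if c (w.getD q 0) then (X : Polynomial ℚ) ^ ((w.drop (q+1)).countP c) else 0)
      = tnum ℚ (w.countP c)
  | [] => by simp [tnum]
  | a :: t => by
    rw [List.length_cons, Finset.sum_range_succ']
    simp only [List.getD_cons_succ, List.getD_cons_zero, List.drop_succ_cons]
    rw [sum_ins c t, List.countP_cons]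
    show tnum ℚ (t.countP c) + (if c a then (X : Polynomial ℚ) ^ ((t.drop 0).countP c) else 0) = _
    by_cases h : c a
    · simp only [h, if_true, List.drop_zero]
      rw [tnum, tnum, Finset.sum_range_succ]
    · simp [h]
def perms (k : ℕ) : Finset (List ℕ) := (List.range' 1 k).permutations.toFinset

lemma mem_perms {k : ℕ} {L : List ℕ} : L ∈ perms k ↔ L.Perm (List.range' 1 k) := by
  rw [perms, List.mem_toFinset, List.mem_permutations]

lemma range'_succ_perm (k : ℕ) : (List.range' 1 (k+1)).Perm ((k+1) :: List.range' 1 k) := by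
  rw [List.range'_concat]
  simpa [Nat.add_comm] using List.perm_append_singleton (1 + 1 * k) (List.range' 1 k)

lemma not_mem_range' {k : ℕ} : (k+1) ∉ List.range' 1 k := by
  rw [List.mem_range'_1]; omega

lemma sum_perms_succ (k : ℕ) (f : List ℕ → Polynomial ℚ) :
    ∑ L ∈ perms (k+1), f L
      = ∑ w ∈ perms k, ∑ p ∈ Finset.range (k+1), f (List.insertIdx w p (k+1)) := by
  rw [← Finset.sum_product']
  refine Finset.sum_nbij' (i := fun L => (L.eraseIdx (L.idxOf (k+1)), L.idxOf (k+1)))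
    (j := fun q => List.insertIdx q.1 q.2 (k+1)) ?_ ?_ ?_ ?_ ?_
  · intro L hL
    have hperm : L.Perm (List.range' 1 (k+1)) := mem_perms.mp hL
    have hm : (k+1) ∈ L := hperm.mem_iff.mpr (by rw [List.mem_range'_1]; omega)
    have hlen : L.length = k + 1 := by rw [hperm.length_eq, List.length_range']
    have hidx : L.idxOf (k+1) < L.length := List.idxOf_lt_length_iff.mpr hm
    have hel : (L.eraseIdx (L.idxOf (k+1))).length = k := by
      rw [List.length_eraseIdx, if_pos hidx, hlen]
      omega
    have hins := myInsertIdx_idxOf (k+1) L hm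
    have hperm2 : L.Perm ((k+1) :: L.eraseIdx (L.idxOf (k+1))) := by
      conv_lhs => rw [← hins]
      exact List.perm_insertIdx _ _ (by rw [hel]; omega)
    rw [Finset.mem_product]
    refine ⟨mem_perms.mpr ?_, by
      show List.idxOf (k+1) L ∈ Finset.range (k+1)
      exact Finset.mem_range.mpr (by omega)⟩
    have : ((k+1) :: L.eraseIdx (L.idxOf (k+1))).Perm ((k+1) :: List.range' 1 k) :=
      hperm2.symm.trans (hperm.trans (range'_succ_perm k))
    exact this.cons_inv
  · intro q hq
    rw [Finset.mem_product] at hq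
    have hperm : q.1.Perm (List.range' 1 k) := mem_perms.mp hq.1
    have hlen : q.1.length = k := by rw [hperm.length_eq, List.length_range']
    have hple : q.2 ≤ q.1.length := by
      have := Finset.mem_range.mp hq.2; omega
    refine mem_perms.mpr ?_
    exact (List.perm_insertIdx _ _ hple).trans
      ((hperm.cons (k+1)).trans (range'_succ_perm k).symm)
  · intro L hL
    have hperm : L.Perm (List.range' 1 (k+1)) := mem_perms.mp hL
    have hm : (k+1) ∈ L := hperm.mem_iff.mpr (by rw [List.mem_range'_1]; omega)
    exact myInsertIdx_idxOf (k+1) L hm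
  · intro q hq
    rw [Finset.mem_product] at hq
    have hperm : q.1.Perm (List.range' 1 k) := mem_perms.mp hq.1
    have hlen : q.1.length = k := by rw [hperm.length_eq, List.length_range']
    have hple : q.2 ≤ q.1.length := by
      have := Finset.mem_range.mp hq.2; omega
    have hnm : (k+1) ∉ q.1 := fun hx => not_mem_range' (hperm.mem_iff.mp hx)
    have h1 : (List.insertIdx q.1 q.2 (k+1)).idxOf (k+1) = q.2 :=
      myIndexOf_insertIdx (k+1) q.2 q.1 hple hnm
    have h2 : (List.insertIdx q.1 q.2 (k+1)).eraseIdx q.2 = q.1 :=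
      List.eraseIdx_insertIdx_self (k+1)
    simp only [h1, h2]
  · intro L hL
    have hperm : L.Perm (List.range' 1 (k+1)) := mem_perms.mp hL
    have hm : (k+1) ∈ L := hperm.mem_iff.mpr (by rw [List.mem_range'_1]; omega)
    rw [myInsertIdx_idxOf (k+1) L hm]

lemma countP_range'_eq (ltP : ℕ → ℕ → Prop) [DecidableRel ltP] (m : ℕ) : ∀ K, K < m →
    ((List.range' 1 K).countP (qE ltP m) : ℕ)
      = ((Finset.Ico 1 (K+1)).filter fun j => ¬ ltP j m ∧ ¬ ltP m j).card
  | 0, _ => by simp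
  | K+1, h => by
    rw [List.range'_concat, List.countP_append, countP_range'_eq ltP m K (by omega)]
    have htop : ((Finset.Ico 1 (K+1+1)).filter fun j => ¬ ltP j m ∧ ¬ ltP m j).card
        = ((Finset.Ico 1 (K+1)).filter fun j => ¬ ltP j m ∧ ¬ ltP m j).card
          + (if (¬ ltP (K+1) m ∧ ¬ ltP m (K+1)) then 1 else 0) := by
      rw [Finset.card_filter, Finset.card_filter, Finset.sum_Ico_succ_top (by omega)]
    rw [htop]
    congr 1
    have hc : 1 + 1 * K = K + 1 := by ring
    rw [hc]
    have hlt : K + 1 < m := h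
    by_cases h1 : ltP (K+1) m <;> by_cases h2 : ltP m (K+1) <;>
      simp [qE, h1, h2, hlt]
lemma condL_insertIdx (ltP : ℕ → ℕ → Prop) [DecidableRel ltP] {n k : ℕ} (hk : 1 ≤ k)
    (hkn : k + 1 ≤ n)
    (htrans : ∀ x y z, ltP x y → ltP y z → ltP x z)
    (hnat : ∀ x y, ltP x y → x < y)
    (hnuio : ∀ x y z, x ∈ Finset.Icc 1 n → y ∈ Finset.Icc 1 n → z ∈ Finset.Icc 1 n →
      y ≠ x → y ≠ z → ltP x z → ¬ ltP x y → ¬ ltP y x → ¬ ltP y z → ¬ ltP z y → x < y ∧ y < z)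
    (w : List ℕ) (hw : w.Perm (List.range' 1 k)) (p : ℕ) (hp : p ≤ w.length) :
    condL ltP (List.insertIdx w p (k+1))
      ↔ (condL ltP w ∧ 1 ≤ p ∧ ¬ ltP (w.getD (p-1) 0) (k+1)) := by
  have hwlen : w.length = k := by rw [hw.length_eq, List.length_range']
  have helt : ∀ a ∈ w, 1 ≤ a ∧ a ≤ k := by
    intro a ha
    have := hw.mem_iff.mp ha
    rw [List.mem_range'_1] at this
    omega
  have hml : ∀ y ∈ w, ¬ ltP (k+1) y := fun y hy hl => by
    have h1 := hnat _ _ hl; have h2 := (helt y hy).2; omega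
  rw [myInsertIdx_eq _ p w hp]
  cases p with
  | zero =>
    simp only [List.take_zero, List.drop_zero, List.nil_append]
    constructor
    · rintro ⟨h1, -⟩
      rw [List.getD_cons_zero] at h1
      omega
    · rintro ⟨-, h, -⟩; omega
  | succ p' =>
    have hp' : p' < k := by omega
    have htklen : (w.take (p'+1)).length = p' + 1 := by
      rw [List.length_take]; omega
    have hhead : (w.take (p'+1) ++ (k+1) :: w.drop (p'+1)).getD 0 0 = w.getD 0 0 := by
      rw [List.getD_append _ _ _ 0 (by omega)]
      rw [List.getD_eq_getElem?_getD, List.getElem?_take, if_pos (by omega),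
        ← List.getD_eq_getElem?_getD]
    have hgl : (w.take (p'+1)).getLast? = some (w.getD p' 0) := by
      rw [List.getLast?_eq_getElem?, htklen, Nat.add_sub_cancel, List.getElem?_take,
        if_pos (by omega), List.getD_eq_getElem w 0 (by omega)]
      exact List.getElem?_eq_getElem _
    have hx0 : w.getD p' 0 ∈ w := by
      rw [List.getD_eq_getElem w 0 (by omega)]; exact List.getElem_mem _
    simp only [Nat.add_sub_cancel]
    constructor
    · rintro ⟨h1, h2⟩
      rw [List.isChain_append] at h2
      obtain ⟨hA, hB', hAB⟩ := h2
      rw [List.isChain_cons] at hB'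
      obtain ⟨-, hB⟩ := hB'
      have hxm : ¬ ltP (w.getD p' 0) (k+1) := by
        refine hAB _ ?_ (k+1) ?_
        · rw [hgl]; rfl
        · rfl
      rw [hhead] at h1
      refine ⟨⟨h1, ?_⟩, by omega, hxm⟩
      rw [← List.take_append_drop (p'+1) w, List.isChain_append]
      refine ⟨hA, hB, ?_⟩
      intro x hx y hy
      rw [hgl, Option.mem_some_iff] at hx
      subst hx
      have hyw : y ∈ w := List.mem_of_mem_drop (List.mem_of_mem_head? hy)
      intro hxy
      by_cases hym : ltP y (k+1)
      · exact hxm (htrans _ _ _ hxy hym)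
      · have h1x := helt _ hx0
        have h1y := helt _ hyw
        have := hnuio (w.getD p' 0) (k+1) y
          (by rw [Finset.mem_Icc]; omega) (by rw [Finset.mem_Icc]; omega)
          (by rw [Finset.mem_Icc]; omega)
          (by omega) (by omega) hxy hxm (hml _ hx0) (hml _ hyw) hym
        omega
    · rintro ⟨⟨h1, hch⟩, -, hxm⟩
      refine ⟨?_, ?_⟩
      · rw [hhead]; exact h1
      · rw [List.isChain_append]
        have hch' := hch
        conv at hch' => rw [← List.take_append_drop (p'+1) w]
        rw [List.isChain_append] at hch'
        obtain ⟨hA, hB, -⟩ := hch'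
        refine ⟨hA, ?_, ?_⟩
        · rw [List.isChain_cons]
          exact ⟨fun y hy => hml _ (List.mem_of_mem_drop (List.mem_of_mem_head? hy)), hB⟩
        · intro x hx y hy
          rw [hgl, Option.mem_some_iff] at hx
          subst hx
          have hy' : y = k + 1 := by
            rw [List.head?_cons, Option.mem_some_iff] at hy
            omega
          subst hy'
          exact hxm
lemma list_main (n : ℕ) (ltP : ℕ → ℕ → Prop) [DecidableRel ltP]
    (htrans : ∀ x y z, ltP x y → ltP y z → ltP x z)
    (hnat : ∀ x y, ltP x y → x < y)
    (hnuio : ∀ x y z, x ∈ Finset.Icc 1 n → y ∈ Finset.Icc 1 n → z ∈ Finset.Icc 1 n →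
      y ≠ x → y ≠ z → ltP x z → ¬ ltP x y → ¬ ltP y x → ¬ ltP y z → ¬ ltP z y → x < y ∧ y < z) :
    ∀ k, 1 ≤ k → k ≤ n →
      ∑ L ∈ perms k, (if condL ltP L then (X : Polynomial ℚ) ^ invL ltP L else 0)
        = ∏ i ∈ Finset.Icc 2 k,
            tnum ℚ (((Finset.Ico 1 i).filter fun j => ¬ ltP j i ∧ ¬ ltP i j).card) := by
  intro k hk
  induction k, hk using Nat.le_induction with
  | base =>
    intro _
    have hp1 : perms 1 = {[1]} := by
      apply Finset.ext
      intro L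
      rw [mem_perms, Finset.mem_singleton, show List.range' 1 1 = [1] from rfl,
        List.perm_singleton]
    rw [hp1, Finset.sum_singleton]
    have hc : condL ltP [1] := ⟨rfl, List.isChain_singleton _⟩
    rw [if_pos hc, show invL ltP [1] = 0 from rfl, pow_zero,
      Finset.Icc_eq_empty (by omega), Finset.prod_empty]
  | succ k hk1 IH =>
    intro hkn
    have hkn' : k ≤ n := by omega
    rw [sum_perms_succ]
    have hstep : ∀ w ∈ perms k,
        (∑ p ∈ Finset.range (k+1),
          if condL ltP (List.insertIdx w p (k+1)) then
            (X : Polynomial ℚ) ^ invL ltP (List.insertIdx w p (k+1)) else 0)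
        = (if condL ltP w then (X : Polynomial ℚ) ^ invL ltP w else 0)
            * tnum ℚ (((Finset.Ico 1 (k+1)).filter
                fun j => ¬ ltP j (k+1) ∧ ¬ ltP (k+1) j).card) := by
      intro w hw
      have hperm := mem_perms.mp hw
      have hwlen : w.length = k := by rw [hperm.length_eq, List.length_range']
      have helt : ∀ a ∈ w, 1 ≤ a ∧ a ≤ k := by
        intro a ha
        have := hperm.mem_iff.mp ha
        rw [List.mem_range'_1] at this
        omega
      have hltm : ∀ a ∈ w, a < k + 1 := fun a ha => by have := (helt a ha).2; omega
      have hterm : ∀ p ∈ Finset.range (k+1),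
          (if condL ltP (List.insertIdx w p (k+1)) then
            (X : Polynomial ℚ) ^ invL ltP (List.insertIdx w p (k+1)) else 0)
          = (if condL ltP w then (X : Polynomial ℚ) ^ invL ltP w else 0)
            * (if 1 ≤ p ∧ ¬ ltP (w.getD (p-1) 0) (k+1) then
                (X : Polynomial ℚ) ^ ((w.drop p).countP (qE ltP (k+1))) else 0) := by
        intro p hp
        have hple : p ≤ w.length := by
          have := Finset.mem_range.mp hp; omega
        rw [invL_insertIdx ltP (k+1) p w hple hltm]
        rw [if_congr (condL_insertIdx ltP hk1 hkn htrans hnat hnuio w hperm p hple) rfl rfl]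
        by_cases h1 : condL ltP w <;> by_cases h2 : 1 ≤ p ∧ ¬ ltP (w.getD (p-1) 0) (k+1) <;>
          simp [h1, h2, pow_add]
      rw [Finset.sum_congr rfl hterm, ← Finset.mul_sum]
      congr 1
      have hs : ∑ p ∈ Finset.range (k+1),
          (if 1 ≤ p ∧ ¬ ltP (w.getD (p-1) 0) (k+1) then
            (X : Polynomial ℚ) ^ ((w.drop p).countP (qE ltP (k+1))) else 0)
          = ∑ q ∈ Finset.range w.length,
            (if qE ltP (k+1) (w.getD q 0) then
              (X : Polynomial ℚ) ^ ((w.drop (q+1)).countP (qE ltP (k+1))) else 0) := by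
        rw [show Finset.range (k+1) = Finset.range (w.length + 1) by rw [hwlen],
          Finset.sum_range_succ']
        have h0 : ¬ (1 ≤ 0 ∧ ¬ ltP (w.getD (0-1) 0) (k+1)) := by omega
        rw [if_neg h0, add_zero]
        refine Finset.sum_congr rfl fun q hq => ?_
        have hqlen : q < w.length := Finset.mem_range.mp hq
        have hmem : w.getD q 0 ∈ w := by
          rw [List.getD_eq_getElem w 0 hqlen]; exact List.getElem_mem _
        have hq1 := helt _ hmem
        have hq2 : ¬ ltP (k+1) (w.getD q 0) := fun hl => by
          have := hnat _ _ hl; omega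
        refine if_congr ?_ rfl rfl
        simp only [Nat.le_add_left, true_and, Nat.add_sub_cancel, qE, decide_eq_true_eq]
        constructor
        · intro h; exact ⟨by omega, hq2, h⟩
        · intro h; exact h.2.2
      rw [hs, sum_ins]
      congr 1
      rw [hperm.countP_eq, countP_range'_eq ltP (k+1) k (by omega)]
    rw [Finset.sum_congr rfl hstep, ← Finset.sum_mul, IH hkn',
      Finset.prod_Icc_succ_top (by omega)]
def wl (n : ℕ) (σ : Equiv.Perm (Fin n)) : List ℕ := List.ofFn fun i => (σ i).1 + 1

lemma wl_length (n : ℕ) (σ : Equiv.Perm (Fin n)) : (wl n σ).length = n := by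
  simp [wl]

lemma wl_getD (n : ℕ) (σ : Equiv.Perm (Fin n)) (i : ℕ) :
    (wl n σ).getD i 0 = word n σ i := by
  rw [wl, word, List.getD_eq_getElem?_getD, List.getElem?_ofFn]
  by_cases h : i < n <;> simp [List.ofFnNthVal, h]

lemma wl_mem_perms (n : ℕ) (σ : Equiv.Perm (Fin n)) : wl n σ ∈ perms n := by
  rw [mem_perms]
  have hnd : (wl n σ).Nodup := List.nodup_ofFn.mpr (fun i j h => by
    exact σ.injective (Fin.val_injective (by omega)))
  refine (List.perm_ext_iff_of_nodup hnd (List.nodup_range')).mpr ?_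
  intro a
  rw [List.mem_range'_1, wl, List.mem_ofFn]
  constructor
  · rintro ⟨i, rfl⟩
    have := (σ i).isLt
    show 1 ≤ (σ i).1 + 1 ∧ (σ i).1 + 1 < 1 + n
    omega
  · rintro ⟨h1, h2⟩
    refine ⟨σ.symm ⟨a - 1, by omega⟩, ?_⟩
    show (σ (σ.symm ⟨a - 1, by omega⟩)).1 + 1 = a
    rw [Equiv.apply_symm_apply]
    show a - 1 + 1 = a
    omega

lemma invG_eq (n : ℕ) (ltP : ℕ → ℕ → Prop) [DecidableRel ltP] (σ : Equiv.Perm (Fin n)) :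
    invG n ltP σ = invL ltP (wl n σ) := by
  rw [invG, invL_eq_sum, Finset.card_filter, Finset.sum_product, wl_length]
  refine Finset.sum_congr rfl fun i _ => Finset.sum_congr rfl fun j _ => ?_
  simp only [wl_getD]

lemma cond_iff (n : ℕ) (ltP : ℕ → ℕ → Prop) [DecidableRel ltP] (σ : Equiv.Perm (Fin n)) :
    (word n σ 0 = 1 ∧
      (∀ i ∈ Finset.range (n - 1), ¬ ltP (word n σ i) (word n σ (i + 1))))
      ↔ condL ltP (wl n σ) := by
  rw [condL, wl_getD]
  refine and_congr Iff.rfl ?_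
  have hg : ∀ (i : ℕ) (h : i < (wl n σ).length), (wl n σ)[i] = word n σ i := by
    intro i h
    rw [← List.getD_eq_getElem _ 0 h, wl_getD]
  rw [List.isChain_iff_getElem]
  constructor
  · intro h i hi
    rw [hg, hg]
    refine h i (Finset.mem_range.mpr ?_)
    rw [wl_length] at hi
    omega
  · intro h i hi
    have hi' : i + 1 < (wl n σ).length := by
      rw [wl_length]
      have := Finset.mem_range.mp hi; omega
    have := h i hi'
    rwa [hg, hg] at this

lemma sum_transfer (n : ℕ) (f : List ℕ → Polynomial ℚ) :
    ∑ σ : Equiv.Perm (Fin n), f (wl n σ) = ∑ L ∈ perms n, f L := by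
  refine Finset.sum_bij (fun σ _ => wl n σ) (fun σ _ => wl_mem_perms n σ) ?_ ?_ (fun _ _ => rfl)
  · intro σ _ τ _ h
    have h2 := List.ofFn_injective h
    apply Equiv.ext
    intro i
    have h3 := congrFun h2 i
    exact Fin.val_injective (by omega)
  · intro L hL
    have hperm := mem_perms.mp hL
    have hlen : L.length = n := by rw [hperm.length_eq, List.length_range']
    have hnd : L.Nodup := hperm.symm.nodup (List.nodup_range')
    have hel : ∀ (i : ℕ) (h : i < n), 1 ≤ L[i]'(by omega) ∧ L[i]'(by omega) ≤ n := by
      intro i h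
      have hm : L[i]'(by omega) ∈ L := List.getElem_mem _
      have := hperm.mem_iff.mp hm
      rw [List.mem_range'_1] at this
      omega
    have ginj : Function.Injective (fun i : Fin n =>
        (⟨L[i.1]'(by omega) - 1, by have := hel i.1 i.2; omega⟩ : Fin n)) := by
      intro i j hij
      simp only [Fin.mk.injEq] at hij
      have h1 := hel i.1 i.2
      have h2 := hel j.1 j.2
      have h3 : L[i.1]'(by omega) = L[j.1]'(by omega) := by omega
      have h4 := (hnd.getElem_inj_iff).mp h3
      exact Fin.val_injective h4
    refine ⟨Equiv.ofBijective _ (Finite.injective_iff_bijective.mp ginj),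
      Finset.mem_univ _, ?_⟩
    apply List.ext_getElem (by rw [wl_length, hlen])
    intro i h1 h2
    rw [wl_length] at h1
    simp only [wl, List.getElem_ofFn]
    show ((⟨L[i]'(by omega) - 1, _⟩ : Fin n)).1 + 1 = L[i]
    have := hel i h1
    simp only
    omega

/-- For a natural unit interval order `P` on `[n]` (n ≥ 1) with incomparability graph `G`:
`∑_{σ ∈ Ñ_P} t^{inv_G(σ)} = ∏_{i=2}^n [b_i]_t`, where `Ñ_P` is the set of words of length
`n` over `P` with distinct letters (i.e. permutations of `[n]`), starting with the smallest
element `1` of `P`, and having no `P`-ascent; `b_i = #{j < i : {j,i} ∈ E}`. -/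
theorem sum_tildeNP_eq_prod (n : ℕ) (hn : 1 ≤ n) (ltP : ℕ → ℕ → Prop) [DecidableRel ltP]
    (hmem : ∀ x y, ltP x y → x ∈ Finset.Icc 1 n ∧ y ∈ Finset.Icc 1 n)
    (htrans : ∀ x y z, ltP x y → ltP y z → ltP x z)
    (hnat : ∀ x y, ltP x y → x < y)
    (hnuio : ∀ x y z, x ∈ Finset.Icc 1 n → y ∈ Finset.Icc 1 n → z ∈ Finset.Icc 1 n →
      y ≠ x → y ≠ z → ltP x z →
      ¬ ltP x y → ¬ ltP y x → ¬ ltP y z → ¬ ltP z y → x < y ∧ y < z) :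
    ∑ σ : Equiv.Perm (Fin n),
      (if word n σ 0 = 1 ∧
          (∀ i ∈ Finset.range (n - 1), ¬ ltP (word n σ i) (word n σ (i + 1)))
       then (Polynomial.X : Polynomial ℚ) ^ invG n ltP σ else 0)
    = ∏ i ∈ Finset.Icc 2 n,
        tnum ℚ (((Finset.Ico 1 i).filter fun j => ¬ ltP j i ∧ ¬ ltP i j).card) := by
  have hmain := list_main n ltP htrans hnat hnuio n hn le_rfl
  rw [← hmain, ← sum_transfer n (fun L => if condL ltP L then (X : Polynomial ℚ) ^ invL ltP L else 0)]
  refine Finset.sum_congr rfl fun σ _ => ?_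
  exact if_congr (cond_iff n ltP σ) (by rw [invG_eq]) rfl
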